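/- Let n ≥ 2, θ = π/(n+1), and I the imaginary unit. For j = 1,…,n and x ∈ ℝ define Ψⱼ(x) = (1/(2πI)) ∫₀^∞ [ e^{Iθ}·(r e^{Iθ})^{j−1}·exp(−x·r·e^{Iθ} − r^{n+1}/(n+1)) − e^{−Iθ}·(r e^{−Iθ})^{j−1}·exp(−x·r·e^{−Iθ} − r^{n+1}/(n+1)) ] dr. Then all these integrals converge absolutely, each Ψⱼ is differentiable on ℝ, and the system Ψⱼ'(x) = −Ψ_{j+1}(x) for j = 1,…,n−1 and Ψₙ'(x) = −x·Ψ₁(x) holds; equivalently, Ψ = (Ψ₁,…,Ψₙ) solves Ψ'(x) + (e + x·e₀)Ψ(x) = 0, where e = Σ_{i=1}^{n−1} E_{i,i+1} and e₀ = E_{n,1}. -/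

import Mathlib

open Real MeasureTheory Set Filter Topology

noncomputable section

namespace SlnAiry

/-- One piece of the integrand: `ε = exp(±Iθ)`, exponent `j` (no subtraction). -/
def P (n j : ℕ) (ε : ℂ) (x r : ℝ) : ℂ :=
  ε * ((r : ℂ) * ε) ^ j *
    Complex.exp (-(x : ℂ) * r * ε - (r : ℂ) ^ (n + 1) / (n + 1))

lemma continuous_P (n j : ℕ) (ε : ℂ) (x : ℝ) : Continuous (fun r => P n j ε x r) := by
  unfold P
  fun_prop

lemma re_exponent_le (n : ℕ) {ε : ℂ} (hε : ‖ε‖ = 1) {x b : ℝ} (hb : |x| ≤ b) {r : ℝ}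
    (hr : 0 ≤ r) :
    (-(x : ℂ) * r * ε - (r : ℂ) ^ (n + 1) / (n + 1)).re ≤ b * r - r ^ (n + 1) / (n + 1) := by
  have h2 : ((r : ℂ) ^ (n + 1) / ((n : ℂ) + 1)) = ((r ^ (n + 1) / ((n : ℝ) + 1) : ℝ) : ℂ) := by
    push_cast; ring
  have h1 : (-(x : ℂ) * r * ε).re ≤ b * r := by
    calc (-(x : ℂ) * r * ε).re ≤ ‖-(x : ℂ) * r * ε‖ :=
          Complex.re_le_norm _
      _ = |x| * |r| := by
          rw [norm_mul, norm_mul, hε, norm_neg, Complex.norm_real, Complex.norm_real,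
            Real.norm_eq_abs, Real.norm_eq_abs, mul_one]
      _ ≤ b * r := by rw [abs_of_nonneg hr]; exact mul_le_mul_of_nonneg_right hb hr
  rw [Complex.sub_re, h2, Complex.ofReal_re]
  linarith

lemma norm_P_le (n j : ℕ) {ε : ℂ} (hε : ‖ε‖ = 1) {x b : ℝ} (hb : |x| ≤ b) {r : ℝ}
    (hr : 0 ≤ r) :
    ‖P n j ε x r‖ ≤ r ^ j * Real.exp (b * r - r ^ (n + 1) / (n + 1)) := by
  have hexp : ‖Complex.exp (-(x : ℂ) * r * ε - (r : ℂ) ^ (n + 1) / (n + 1))‖ ≤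
      Real.exp (b * r - r ^ (n + 1) / (n + 1)) := by
    rw [Complex.norm_exp]
    exact Real.exp_le_exp.2 (re_exponent_le n hε hb hr)
  calc ‖P n j ε x r‖ = ‖ε‖ * ‖(r : ℂ) * ε‖ ^ j * ‖Complex.exp _‖ := by
        rw [P, norm_mul, norm_mul, norm_pow]
    _ = r ^ j * ‖Complex.exp (-(x : ℂ) * r * ε - (r : ℂ) ^ (n + 1) / (n + 1))‖ := by
        rw [hε, norm_mul, hε, Complex.norm_real, Real.norm_eq_abs, abs_of_nonneg hr,
          mul_one, one_mul]
    _ ≤ r ^ j * Real.exp (b * r - r ^ (n + 1) / (n + 1)) := by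
        exact mul_le_mul_of_nonneg_left hexp (pow_nonneg hr j)

/-- The dominating function is integrable. -/
lemma integrable_dom (n k : ℕ) (hn : 1 ≤ n) (b : ℝ) :
    IntegrableOn (fun r : ℝ => r ^ k * Real.exp (b * r - r ^ (n + 1) / (n + 1)))
      (Ioi (0 : ℝ)) := by
  set c : ℝ := max (k + b + 1) 1 with hc
  have hc1 : (1 : ℝ) ≤ c := le_max_right _ _
  have hc0 : (0 : ℝ) < c := lt_of_lt_of_le one_pos hc1
  set M : ℝ := max (c * (n + 1)) 1 with hM
  have hM1 : (1 : ℝ) ≤ M := le_max_right _ _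
  have key : ∀ r : ℝ, 0 < r →
      r ^ k * Real.exp (b * r - r ^ (n + 1) / (n + 1)) ≤
        Real.exp (c * M) * Real.exp (-1 * r) := by
    intro r hr
    have hrk : r ^ k ≤ Real.exp (k * r) := by
      calc r ^ k ≤ Real.exp r ^ k := by
            exact pow_le_pow_left₀ hr.le (by linarith [Real.add_one_le_exp r]) k
        _ = Real.exp (k * r) := by rw [← Real.exp_nat_mul]
    have h1 : r ^ k * Real.exp (b * r - r ^ (n + 1) / (n + 1)) ≤
        Real.exp ((k + b) * r - r ^ (n + 1) / (n + 1)) := by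
      calc r ^ k * Real.exp (b * r - r ^ (n + 1) / (n + 1)) ≤
            Real.exp (k * r) * Real.exp (b * r - r ^ (n + 1) / (n + 1)) :=
            mul_le_mul_of_nonneg_right hrk (Real.exp_nonneg _)
        _ = Real.exp ((k + b) * r - r ^ (n + 1) / (n + 1)) := by
            rw [← Real.exp_add]; ring_nf
    have h2 : (k + b) * r - r ^ (n + 1) / (n + 1) ≤ c * M - r := by
      have hcr : (k + b) * r + r ≤ c * r := by
        have : (k + b + 1) * r ≤ c * r :=
          mul_le_mul_of_nonneg_right (le_max_left _ _) hr.le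
        linarith
      rcases le_or_gt r M with h | h
      · have : c * r ≤ c * M := mul_le_mul_of_nonneg_left h hc0.le
        have hpow : (0 : ℝ) ≤ r ^ (n + 1) / (n + 1) := by positivity
        nlinarith
      · -- r > M ≥ 1, so r^n ≥ r ≥ c(n+1), hence c r ≤ r^(n+1)/(n+1)
        have hr1 : (1 : ℝ) ≤ r := le_trans hM1 h.le
        have hrn : r ≤ r ^ n := by
          calc r = r ^ 1 := (pow_one r).symm
            _ ≤ r ^ n := pow_le_pow_right₀ hr1 hn
        have hcn : c * (n + 1) ≤ r ^ n := le_trans (le_trans (le_max_left _ _) h.le) hrn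
        have hn1 : (0 : ℝ) < (n : ℝ) + 1 := by positivity
        have : c * r ≤ r ^ (n + 1) / (n + 1) := by
          rw [le_div_iff₀ hn1, pow_succ]
          calc c * r * (n + 1) = c * (n + 1) * r := by ring
            _ ≤ r ^ n * r := mul_le_mul_of_nonneg_right hcn hr.le
        have hcM : 0 ≤ c * M := mul_nonneg hc0.le (le_trans zero_le_one hM1)
        nlinarith
    calc r ^ k * Real.exp (b * r - r ^ (n + 1) / (n + 1)) ≤
          Real.exp ((k + b) * r - r ^ (n + 1) / (n + 1)) := h1
      _ ≤ Real.exp (c * M - r) := Real.exp_le_exp.2 h2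
      _ = Real.exp (c * M) * Real.exp (-1 * r) := by rw [← Real.exp_add]; ring_nf
  have hint : IntegrableOn (fun r : ℝ => Real.exp (c * M) * Real.exp (-1 * r))
      (Ioi (0 : ℝ)) := (exp_neg_integrableOn_Ioi 0 one_pos).const_mul _
  refine hint.mono' ?_ ?_
  · exact (Continuous.aestronglyMeasurable (by fun_prop)).restrict
  · filter_upwards [ae_restrict_mem measurableSet_Ioi] with r hr
    rw [Real.norm_eq_abs,
      abs_of_nonneg (mul_nonneg (pow_nonneg (le_of_lt hr) k) (Real.exp_nonneg _))]
    exact key r hr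

lemma integrable_P (n j : ℕ) (hn : 1 ≤ n) {ε : ℂ} (hε : ‖ε‖ = 1) (x : ℝ) :
    IntegrableOn (fun r : ℝ => P n j ε x r) (Ioi (0 : ℝ)) := by
  refine (integrable_dom n j hn |x|).mono' ?_ ?_
  · exact ((continuous_P n j ε x).aestronglyMeasurable).restrict
  · filter_upwards [ae_restrict_mem measurableSet_Ioi] with r hr
    exact norm_P_le n j hε le_rfl hr.le

/-- `exp(±Iθ)` has norm 1. -/
lemma norm_eps (θ : ℝ) : ‖Complex.exp (Complex.I * θ)‖ = 1 ∧
    ‖Complex.exp (-(Complex.I * θ))‖ = 1 := by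
  constructor <;>
  · rw [Complex.norm_exp]
    simp [Complex.mul_re]

/-- Derivative in `x` of a piece. -/
lemma hasDerivAt_P (n j : ℕ) (ε : ℂ) (x r : ℝ) :
    HasDerivAt (fun x : ℝ => P n j ε x r) (-(P n (j + 1) ε x r)) x := by
  have hid : HasDerivAt (fun x : ℝ => (x : ℂ)) 1 x := Complex.ofRealCLM.hasDerivAt
  have h1 : HasDerivAt (fun x : ℝ => -(x : ℂ) * r * ε - (r : ℂ) ^ (n + 1) / (n + 1))
      (-(r : ℂ) * ε) x := by
    have := (((hid.neg).mul_const (r : ℂ)).mul_const ε).sub_const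
      ((r : ℂ) ^ (n + 1) / (n + 1))
    refine this.congr_deriv (Eq.symm ?_)
    ring
  have h2 := h1.cexp
  have h3 := h2.const_mul (ε * ((r : ℂ) * ε) ^ j)
  refine h3.congr_deriv (Eq.symm ?_)
  simp only [P]
  rw [pow_succ]
  ring


/-- The full integrand, with generic exponent `k`. -/
def G (n k : ℕ) (θ x r : ℝ) : ℂ :=
  P n k (Complex.exp (Complex.I * θ)) x r - P n k (Complex.exp (-(Complex.I * θ))) x r

lemma continuous_G (n k : ℕ) (θ x : ℝ) : Continuous (fun r => G n k θ x r) :=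
  (continuous_P n k _ x).sub (continuous_P n k _ x)

lemma integrable_G (n k : ℕ) (hn : 1 ≤ n) (θ x : ℝ) :
    IntegrableOn (fun r => G n k θ x r) (Ioi (0 : ℝ)) :=
  (integrable_P n k hn (norm_eps θ).1 x).sub (integrable_P n k hn (norm_eps θ).2 x)

lemma norm_G_le (n k : ℕ) (θ : ℝ) {x b r : ℝ} (hb : |x| ≤ b) (hr : 0 ≤ r) :
    ‖G n k θ x r‖ ≤ 2 * (r ^ k * Real.exp (b * r - r ^ (n + 1) / (n + 1))) := by
  calc ‖G n k θ x r‖ ≤ ‖P n k (Complex.exp (Complex.I * θ)) x r‖ +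
        ‖P n k (Complex.exp (-(Complex.I * θ))) x r‖ := norm_sub_le _ _
    _ ≤ 2 * (r ^ k * Real.exp (b * r - r ^ (n + 1) / (n + 1))) := by
        have h1 := norm_P_le n k (norm_eps θ).1 hb hr
        have h2 := norm_P_le n k (norm_eps θ).2 hb hr
        linarith

lemma hasDerivAt_G (n k : ℕ) (θ x r : ℝ) :
    HasDerivAt (fun x : ℝ => G n k θ x r) (-(G n (k + 1) θ x r)) x := by
  have h := (hasDerivAt_P n k (Complex.exp (Complex.I * θ)) x r).sub
    (hasDerivAt_P n k (Complex.exp (-(Complex.I * θ))) x r)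
  refine h.congr_deriv (Eq.symm ?_)
  simp only [G]
  ring

set_option maxHeartbeats 1000000 in
lemma hasDerivAt_integral_G (n k : ℕ) (hn : 1 ≤ n) (θ x : ℝ) :
    HasDerivAt (fun y : ℝ => ∫ r in Ioi (0 : ℝ), G n k θ y r)
      (∫ r in Ioi (0 : ℝ), -(G n (k + 1) θ x r)) x := by
  have h1 : ∀ᶠ y in 𝓝 x, AEStronglyMeasurable (fun r => G n k θ y r)
      (volume.restrict (Ioi (0 : ℝ))) :=
    Eventually.of_forall fun y => ((continuous_G n k θ y).aestronglyMeasurable).restrict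
  have h2 : Integrable (fun r => G n k θ x r) (volume.restrict (Ioi (0 : ℝ))) :=
    integrable_G n k hn θ x
  have h3 : AEStronglyMeasurable (fun r => -(G n (k + 1) θ x r))
      (volume.restrict (Ioi (0 : ℝ))) :=
    ((continuous_G n (k + 1) θ x).neg.aestronglyMeasurable).restrict
  have h4 : ∀ᵐ r ∂(volume.restrict (Ioi (0 : ℝ))), ∀ y ∈ Metric.ball x 1,
      ‖-(G n (k + 1) θ y r)‖ ≤
        2 * (r ^ (k + 1) * Real.exp ((|x| + 1) * r - r ^ (n + 1) / (n + 1))) := by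
    filter_upwards [ae_restrict_mem measurableSet_Ioi] with r hr
    intro y hy
    rw [norm_neg]
    have hyx : |y| ≤ |x| + 1 := by
      have hd : |y - x| < 1 := by
        have := Metric.mem_ball.mp hy
        rwa [Real.dist_eq] at this
      have h2' : |y| - |x| ≤ |y - x| := abs_sub_abs_le_abs_sub y x
      linarith
    exact norm_G_le n (k + 1) θ hyx (le_of_lt hr)
  have h5 : Integrable
      (fun r : ℝ => 2 * (r ^ (k + 1) * Real.exp ((|x| + 1) * r - r ^ (n + 1) / (n + 1))))
      (volume.restrict (Ioi (0 : ℝ))) :=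
    (integrable_dom n (k + 1) hn (|x| + 1)).const_mul 2
  have h6 : ∀ᵐ r ∂(volume.restrict (Ioi (0 : ℝ))), ∀ y ∈ Metric.ball x 1,
      HasDerivAt (fun y : ℝ => G n k θ y r) (-(G n (k + 1) θ y r)) y :=
    Eventually.of_forall fun r y _ => hasDerivAt_G n k θ y r
  exact (hasDerivAt_integral_of_dominated_loc_of_deriv_le (Metric.ball_mem_nhds x one_pos) h1 h2 h3 h4 h5 h6).2

lemma eps_pow (n : ℕ) (θ : ℝ) (hθ : θ = π / (n + 1)) :
    Complex.exp (Complex.I * θ) ^ (n + 1) = -1 ∧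
      Complex.exp (-(Complex.I * θ)) ^ (n + 1) = -1 := by
  have hne : ((n : ℝ) + 1) ≠ 0 := by positivity
  have hθπ : ((n : ℝ) + 1) * θ = π := by rw [hθ]; field_simp
  have hθπ' : ((n : ℂ) + 1) * (θ : ℂ) = (π : ℂ) := by exact_mod_cast hθπ
  have h1 : ((n + 1 : ℕ) : ℂ) * (Complex.I * θ) = (π : ℂ) * Complex.I := by
    push_cast
    linear_combination Complex.I * hθπ'
  constructor
  · rw [← Complex.exp_nat_mul, h1, Complex.exp_pi_mul_I]
  · rw [← Complex.exp_nat_mul, mul_neg, h1, Complex.exp_neg, Complex.exp_pi_mul_I]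
    norm_num

lemma key_integral (n : ℕ) (hn : 1 ≤ n) (θ : ℝ) (hθ : θ = π / (n + 1)) (x : ℝ) :
    ∫ r in Ioi (0 : ℝ), G n n θ x r = (x : ℂ) * ∫ r in Ioi (0 : ℝ), G n 0 θ x r := by
  obtain ⟨hp, hm⟩ := eps_pow n θ hθ
  set εp := Complex.exp (Complex.I * θ) with hεpd
  set εm := Complex.exp (-(Complex.I * θ)) with hεmd
  have hεp : ‖εp‖ = 1 := (norm_eps θ).1
  have hεm : ‖εm‖ = 1 := (norm_eps θ).2
  set f : ℝ → ℂ := fun r =>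
    Complex.exp (-(x : ℂ) * r * εp - (r : ℂ) ^ (n + 1) / (n + 1)) -
      Complex.exp (-(x : ℂ) * r * εm - (r : ℂ) ^ (n + 1) / (n + 1)) with hfd
  set f' : ℝ → ℂ := fun r => -(x : ℂ) * G n 0 θ x r + G n n θ x r with hf'd
  have hderiv : ∀ r ∈ Ioi (0 : ℝ), HasDerivAt f (f' r) r := by
    intro r _
    have hid : HasDerivAt (fun r : ℝ => (r : ℂ)) 1 r := Complex.ofRealCLM.hasDerivAt
    have hpow : HasDerivAt (fun r : ℝ => ((r : ℂ)) ^ (n + 1) / ((n : ℂ) + 1))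
        ((r : ℂ) ^ n) r := by
      have h := ((hasDerivAt_pow (n + 1) r).ofReal_comp).div_const ((n : ℂ) + 1)
      have hne : ((n : ℂ) + 1) ≠ 0 := Nat.cast_add_one_ne_zero n
      refine (h.congr_of_eventuallyEq (Eventually.of_forall fun y => ?_)).congr_deriv (Eq.symm ?_)
      · push_cast; ring
      · push_cast
        field_simp
    have hlin : ∀ ε : ℂ, HasDerivAt (fun r : ℝ => -(x : ℂ) * (r : ℂ) * ε)
        (-(x : ℂ) * ε) r := by
      intro ε
      have h := (hid.const_mul (-(x : ℂ))).mul_const ε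
      refine h.congr_deriv (Eq.symm ?_)
      ring
    have hEp := ((hlin εp).sub hpow).cexp
    have hEm := ((hlin εm).sub hpow).cexp
    have h := hEp.sub hEm
    refine h.congr_deriv (Eq.symm ?_)
    simp only [hf'd, G, P, pow_zero, mul_one, mul_pow]
    linear_combination ((r : ℂ) ^ n *
        Complex.exp (-(x : ℂ) * r * εp - (r : ℂ) ^ (n + 1) / (n + 1))) * hp -
      ((r : ℂ) ^ n *
        Complex.exp (-(x : ℂ) * r * εm - (r : ℂ) ^ (n + 1) / (n + 1))) * hm
  have hf'int : IntegrableOn f' (Ioi (0 : ℝ)) := by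
    refine Integrable.add ?_ (integrable_G n n hn θ x)
    exact (integrable_G n 0 hn θ x).const_mul _
  have hcont : ContinuousWithinAt f (Ici (0 : ℝ)) 0 :=
    Continuous.continuousWithinAt (by unfold f; fun_prop)
  have htend : Tendsto f atTop (𝓝 (0 : ℂ)) := by
    have hexp_tend : Tendsto (fun r : ℝ => |x| * r - r ^ (n + 1) / ((n : ℝ) + 1))
        atTop atBot := by
      have h1 : Tendsto (fun r : ℝ => r ^ n / ((n : ℝ) + 1)) atTop atTop :=
        (tendsto_pow_atTop (Nat.one_le_iff_ne_zero.1 hn)).atTop_div_const (by positivity)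
      have h1' : Tendsto (fun r : ℝ => -(r ^ n / ((n : ℝ) + 1))) atTop atBot :=
        tendsto_neg_atTop_atBot.comp h1
      have h2 : Tendsto (fun r : ℝ => |x| + -(r ^ n / ((n : ℝ) + 1))) atTop atBot :=
        tendsto_atBot_add_const_left atTop (|x|) h1'
      have h3 : Tendsto (fun r : ℝ => r * (|x| + -(r ^ n / ((n : ℝ) + 1)))) atTop atBot :=
        tendsto_id.atTop_mul_atBot₀ h2
      exact h3.congr (fun r => by ring)
    have h4 : Tendsto (fun r : ℝ => Real.exp (|x| * r - r ^ (n + 1) / ((n : ℝ) + 1)))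
        atTop (𝓝 0) := Real.tendsto_exp_atBot.comp hexp_tend
    have h5 : Tendsto (fun r : ℝ => 2 * Real.exp (|x| * r - r ^ (n + 1) / ((n : ℝ) + 1)))
        atTop (𝓝 0) := by
      have := h4.const_mul 2
      simpa using this
    apply squeeze_zero_norm' _ h5
    filter_upwards [eventually_ge_atTop (0 : ℝ)] with r hr
    have h6 : ‖Complex.exp (-(x : ℂ) * r * εp - (r : ℂ) ^ (n + 1) / (n + 1))‖ ≤
        Real.exp (|x| * r - r ^ (n + 1) / ((n : ℝ) + 1)) := by
      rw [Complex.norm_exp]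
      exact Real.exp_le_exp.2 (re_exponent_le n hεp le_rfl hr)
    have h7 : ‖Complex.exp (-(x : ℂ) * r * εm - (r : ℂ) ^ (n + 1) / (n + 1))‖ ≤
        Real.exp (|x| * r - r ^ (n + 1) / ((n : ℝ) + 1)) := by
      rw [Complex.norm_exp]
      exact Real.exp_le_exp.2 (re_exponent_le n hεm le_rfl hr)
    calc ‖f r‖ ≤ _ + _ := norm_sub_le _ _
      _ ≤ 2 * Real.exp (|x| * r - r ^ (n + 1) / ((n : ℝ) + 1)) := by linarith
  have h0 : f 0 = 0 := by
    simp [hfd, zero_pow (Nat.succ_ne_zero n)]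
  have hFTC := integral_Ioi_of_hasDerivAt_of_tendsto hcont hderiv hf'int htend
  rw [h0, sub_zero] at hFTC
  have hsplit : (∫ r in Ioi (0 : ℝ), f' r) =
      -(x : ℂ) * (∫ r in Ioi (0 : ℝ), G n 0 θ x r) + ∫ r in Ioi (0 : ℝ), G n n θ x r := by
    simp only [hf'd]
    rw [integral_add ((integrable_G n 0 hn θ x).const_mul _) (integrable_G n n hn θ x),
      integral_const_mul]
  rw [hFTC] at hsplit
  linear_combination -hsplit

end SlnAiry


/-- the `𝔰𝔩ₙ`-Airy function. The contour integrals `Ψⱼ` converge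
absolutely, are differentiable, and solve the system `Ψⱼ' = −Ψ_{j+1}`
(`1 ≤ j ≤ n−1`), `Ψₙ' = −x·Ψ₁`, i.e. `Ψ' + (e + x·e₀)Ψ = 0`. -/
theorem sl_n_airy_function
    (n : ℕ) (hn : 2 ≤ n) (θ : ℝ) (hθ : θ = π / (n + 1))
    (Ψ : ℕ → ℝ → ℂ)
    (hΨ : ∀ j : ℕ, ∀ x : ℝ, Ψ j x = (2 * (π : ℂ) * Complex.I)⁻¹ *
      ∫ r in Set.Ioi (0 : ℝ),
        (Complex.exp (Complex.I * θ) * ((r : ℂ) * Complex.exp (Complex.I * θ)) ^ (j - 1) *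
            Complex.exp (-(x : ℂ) * r * Complex.exp (Complex.I * θ) -
              (r : ℂ) ^ (n + 1) / (n + 1)) -
          Complex.exp (-(Complex.I * θ)) *
            ((r : ℂ) * Complex.exp (-(Complex.I * θ))) ^ (j - 1) *
            Complex.exp (-(x : ℂ) * r * Complex.exp (-(Complex.I * θ)) -
              (r : ℂ) ^ (n + 1) / (n + 1)))) :
    (∀ j : ℕ, 1 ≤ j → j ≤ n → ∀ x : ℝ, IntegrableOn
      (fun r : ℝ =>
        Complex.exp (Complex.I * θ) * ((r : ℂ) * Complex.exp (Complex.I * θ)) ^ (j - 1) *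
            Complex.exp (-(x : ℂ) * r * Complex.exp (Complex.I * θ) -
              (r : ℂ) ^ (n + 1) / (n + 1)) -
          Complex.exp (-(Complex.I * θ)) *
            ((r : ℂ) * Complex.exp (-(Complex.I * θ))) ^ (j - 1) *
            Complex.exp (-(x : ℂ) * r * Complex.exp (-(Complex.I * θ)) -
              (r : ℂ) ^ (n + 1) / (n + 1)))
      (Set.Ioi (0 : ℝ))) ∧
    (∀ j : ℕ, 1 ≤ j → j ≤ n - 1 → ∀ x : ℝ,
      HasDerivAt (Ψ j) (-(Ψ (j + 1) x)) x) ∧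
    (∀ x : ℝ, HasDerivAt (Ψ n) (-(x : ℂ) * Ψ 1 x) x) := by
  have hn1 : 1 ≤ n := le_trans (by norm_num) hn
  have hfun : ∀ j : ℕ, ∀ y : ℝ, Ψ j y = (2 * (π : ℂ) * Complex.I)⁻¹ *
      ∫ r in Set.Ioi (0 : ℝ), SlnAiry.G n (j - 1) θ y r := fun j y => hΨ j y
  have hd : ∀ j : ℕ, 1 ≤ j → ∀ x : ℝ, HasDerivAt (Ψ j)
      (-((2 * (π : ℂ) * Complex.I)⁻¹ *
        ∫ r in Set.Ioi (0 : ℝ), SlnAiry.G n j θ x r)) x := by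
    intro j hj x
    have hfe : Ψ j = fun y : ℝ => (2 * (π : ℂ) * Complex.I)⁻¹ *
        ∫ r in Set.Ioi (0 : ℝ), SlnAiry.G n (j - 1) θ y r := funext fun y => hfun j y
    rw [hfe]
    have h := (SlnAiry.hasDerivAt_integral_G n (j - 1) hn1 θ x).const_mul
      ((2 * (π : ℂ) * Complex.I)⁻¹)
    rw [Nat.sub_add_cancel hj] at h
    refine h.congr_deriv (Eq.symm ?_)
    rw [integral_neg]
    ring
  refine ⟨?_, ?_, ?_⟩
  · intro j _ _ x
    exact (SlnAiry.integrable_P n (j - 1) hn1 (SlnAiry.norm_eps θ).1 x).sub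
      (SlnAiry.integrable_P n (j - 1) hn1 (SlnAiry.norm_eps θ).2 x)
  · intro j hj _ x
    have e : Ψ (j + 1) x = (2 * (π : ℂ) * Complex.I)⁻¹ *
        ∫ r in Set.Ioi (0 : ℝ), SlnAiry.G n j θ x r := hΨ (j + 1) x
    rw [e]
    exact hd j hj x
  · intro x
    have h := hd n hn1 x
    have e : Ψ 1 x = (2 * (π : ℂ) * Complex.I)⁻¹ *
        ∫ r in Set.Ioi (0 : ℝ), SlnAiry.G n 0 θ x r := hΨ 1 x
    have hk := SlnAiry.key_integral n hn1 θ hθ x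
    refine h.congr_deriv (Eq.symm ?_)
    rw [e, hk]
    ring
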